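/- For every finite player set N and embedded coalition (T,τ) of N, the auxiliary TU game of the scaled Dirac game δ_{T,τ} equals the Dirac TU game δ_T^N, i.e., (δ_{T,τ})_{−(N\S)}(S,∅) = 1 if S = T and 0 otherwise, for all S ⊆ N. -/

import Mathlib

open Finset BigOperators

namespace TUX

/-- A (raw) game in partition function form: assigns a real worth to each
coalition together with a partition (of the outside players). -/
abbrev Game := Finset ℕ → Finset (Finset ℕ) → ℝ

/-- A TU game (characteristic function). -/
abbrev TUGame := Finset ℕ → ℝ

/-- A solution for TUX games: given a player set and a game, assigns payoffs. -/
abbrev Sol := Finset ℕ → Game → ℕ → ℝ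

/-- `w` is a genuine TUX game: the empty coalition has worth 0. -/
def IsTUX (w : Game) : Prop := ∀ π, w ∅ π = 0

/-- `π` is a partition of the finite set `M`. -/
def IsPartition (M : Finset ℕ) (π : Finset (Finset ℕ)) : Prop :=
  (∀ B ∈ π, B ⊆ M) ∧ ∅ ∉ π ∧ ∀ x ∈ M, (π.filter (fun B => x ∈ B)).card = 1

instance (M : Finset ℕ) : DecidablePred (IsPartition M) := fun π => by
  unfold IsPartition; infer_instance

/-- The finite set of all partitions of `M`. -/
def partitionsOf (M : Finset ℕ) : Finset (Finset (Finset ℕ)) :=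
  (M.powerset.powerset).filter (IsPartition M)

/-- The Ewens(θ = 1) probability of the partition `π` of `M`:
`p*_M(π) = ∏_{B ∈ π} (|B| - 1)! / |M|!`. -/
noncomputable def pstar (M : Finset ℕ) (π : Finset (Finset ℕ)) : ℝ :=
  (∏ B ∈ π, ((B.card - 1).factorial : ℝ)) / (M.card.factorial : ℝ)

/-- The block of `π` containing `j` (junk if `π` is not a partition containing `j`). -/
def blockOf (π : Finset (Finset ℕ)) (j : ℕ) : Finset ℕ :=
  (π.filter (fun B => j ∈ B)).sup id

/-- Add player `i` to the block `B` of `π`. -/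
def addToBlock (π : Finset (Finset ℕ)) (i : ℕ) (B : Finset ℕ) : Finset (Finset ℕ) :=
  insert (insert i B) (π.erase B)

/-- The restriction operator `r⋆` removing a single player `i` from a game on `N`:
`w₋ᵢ(S,π) = (1/(n-s)) (w(S, π₊ᵢ⇝∅) + ∑_{j ∈ N∖(S∪{i})} w(S, π₊ᵢ⇝π(j)))`. -/
noncomputable def restrict1 (N : Finset ℕ) (w : Game) (i : ℕ) : Game :=
  fun S π =>
    ((N.card : ℝ) - (S.card : ℝ))⁻¹ *
      (w S (insert {i} π) + ∑ j ∈ (N \ S).erase i, w S (addToBlock π i (blockOf π j)))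

/-- Iterated removal of a list of players. -/
noncomputable def restrictL : Finset ℕ → Game → List ℕ → Game
  | _, w, [] => w
  | N, w, i :: l => restrictL (N.erase i) (restrict1 N w i) l

/-- Removal of a set of players (via the increasing enumeration; by path
independence of `r⋆` the order is immaterial). -/
noncomputable def restrictSet (N : Finset ℕ) (w : Game) (T : Finset ℕ) : Game :=
  restrictL N w (T.sort (· ≤ ·))

/-- The average TU game `v̄_w` of a TUX game `w` on `N`. -/
noncomputable def avg (N : Finset ℕ) (w : Game) : TUGame :=
  fun S => ∑ π ∈ partitionsOf (N \ S), pstar (N \ S) π * w S π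

/-- The auxiliary TU game `v*_w(S) = w₋(N∖S)(S,∅)`. -/
noncomputable def auxGame (N : Finset ℕ) (w : Game) : TUGame :=
  fun S => restrictSet N w (N \ S) S ∅

/-- The Shapley value of a TU game on player set `N`. -/
noncomputable def shapley (N : Finset ℕ) (v : TUGame) (i : ℕ) : ℝ :=
  ∑ S ∈ (N.erase i).powerset,
    (((S.card.factorial : ℝ) * ((N.card - S.card - 1).factorial : ℝ)) / (N.card.factorial : ℝ)) *
      (v (insert i S) - v S)

/-- The MPW solution: the Shapley value of the average game. -/
noncomputable def MPW (N : Finset ℕ) (w : Game) (i : ℕ) : ℝ := shapley N (avg N w) i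

/-- The MPW solution as a solution for TUX games. -/
noncomputable def MPWsol : Sol := fun N w i => MPW N w i

/-- The scaled Dirac TUX game `δ_{T,τ}` on `N`. -/
noncomputable def scaledDirac (N T : Finset ℕ) (τ : Finset (Finset ℕ)) : Game :=
  fun S π => if S = T ∧ π = τ then (pstar (N \ T) τ)⁻¹ else 0

/-- `τ₋S`: remove the players of `S` from each block of `τ`, discarding empty blocks. -/
def partRemove (τ : Finset (Finset ℕ)) (S : Finset ℕ) : Finset (Finset ℕ) :=
  (τ.image (fun B => B \ S)).erase ∅

/-- The Sobolev-reduced TUX game `w₋ⱼ^{So,φ}` on `N ∖ {j}`. -/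
noncomputable def sobRed (N : Finset ℕ) (φ : Sol) (w : Game) (j : ℕ) : Game :=
  fun S π =>
    ((S.card : ℝ) / ((N.card : ℝ) - 1)) * (w (insert j S) π - φ N w j) +
      (1 - (S.card : ℝ) / ((N.card : ℝ) - 1)) * restrict1 N w j S π

/-- The Hart–Mas-Colell reduced TUX game `w₋T^{HM,φ}` on `N ∖ T`. -/
noncomputable def hmRed (N : Finset ℕ) (φ : Sol) (w : Game) (T : Finset ℕ) : Game :=
  fun S π => w (S ∪ T) π - ∑ j ∈ T, φ (S ∪ T) (restrictSet N w (N \ (S ∪ T))) j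

/-- Efficiency for TUX games. -/
def EfficientX (φ : Sol) : Prop :=
  ∀ (N : Finset ℕ) (w : Game), IsTUX w → ∑ i ∈ N, φ N w i = w N ∅

/-- Balanced contributions for TUX games (w.r.t. the restriction operator `r⋆`). -/
def BalancedContributionsX (φ : Sol) : Prop :=
  ∀ (N : Finset ℕ) (w : Game), IsTUX w → ∀ i ∈ N, ∀ j ∈ N,
    φ N w i - φ (N.erase j) (restrict1 N w j) i
      = φ N w j - φ (N.erase i) (restrict1 N w i) j

/-- 2-standardness for TUX games. -/
def TwoStandardX (φ : Sol) : Prop :=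
  ∀ i j : ℕ, i ≠ j → ∀ w : Game, IsTUX w →
    φ {i, j} w i
      = w {i} {({j} : Finset ℕ)}
        + (w {i, j} ∅ - w {j} {({i} : Finset ℕ)} - w {i} {({j} : Finset ℕ)}) / 2

/-- Sobolev consistency for TUX games. -/
def SobolevConsistentX (φ : Sol) : Prop :=
  ∀ (N : Finset ℕ) (w : Game), IsTUX w → ∀ i ∈ N, ∀ j ∈ N, i ≠ j →
    φ N w i = φ (N.erase j) (sobRed N φ w j) i

/-- Hart–Mas-Colell consistency (single-player removal) for TUX games. -/
def HMConsistentX (φ : Sol) : Prop :=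
  ∀ (N : Finset ℕ) (w : Game), IsTUX w → ∀ i ∈ N, ∀ j ∈ N, i ≠ j →
    φ N w i = φ (N.erase j) (hmRed N φ w {j}) i

/-- Set Hart–Mas-Colell consistency (removal of a coalition) for TUX games. -/
def SetHMConsistentX (φ : Sol) : Prop :=
  ∀ (N : Finset ℕ) (w : Game), IsTUX w → ∀ i ∈ N, ∀ T ⊆ N.erase i,
    φ N w i = φ (N \ T) (hmRed N φ w T) i

/-- The finite set of embedded coalitions `(T,τ)` of `N` with `T ≠ ∅`. -/
def embeddedNE (N : Finset ℕ) : Finset (Finset ℕ × Finset (Finset ℕ)) :=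
  (N.powerset ×ˢ N.powerset.powerset).filter
    (fun p => p.1.Nonempty ∧ IsPartition (N \ p.1) p.2)

end TUX
namespace TUXAux
open TUX

lemma filter_eq_blockOf {R : Finset ℕ} {τ : Finset (Finset ℕ)} {x : ℕ}
    (h : IsPartition R τ) (hx : x ∈ R) :
    τ.filter (fun B => x ∈ B) = {blockOf τ x} := by
  obtain ⟨a, ha⟩ := Finset.card_eq_one.mp (h.2.2 x hx)
  have hb : blockOf τ x = a := by rw [blockOf, ha, Finset.sup_singleton]; rfl
  rw [hb, ha]

lemma blockOf_mem {R : Finset ℕ} {τ : Finset (Finset ℕ)} {x : ℕ}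
    (h : IsPartition R τ) (hx : x ∈ R) : blockOf τ x ∈ τ ∧ x ∈ blockOf τ x := by
  have hm : blockOf τ x ∈ τ.filter (fun B => x ∈ B) := by
    rw [filter_eq_blockOf h hx]; exact Finset.mem_singleton_self _
  exact Finset.mem_filter.mp hm

lemma part_unique {R : Finset ℕ} {τ : Finset (Finset ℕ)} {x : ℕ}
    (h : IsPartition R τ) (hx : x ∈ R) {B₁ B₂ : Finset ℕ}
    (h1 : B₁ ∈ τ) (hx1 : x ∈ B₁) (h2 : B₂ ∈ τ) (hx2 : x ∈ B₂) : B₁ = B₂ := by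
  have hf := filter_eq_blockOf h hx
  have m1 : B₁ ∈ τ.filter (fun B => x ∈ B) := Finset.mem_filter.mpr ⟨h1, hx1⟩
  have m2 : B₂ ∈ τ.filter (fun B => x ∈ B) := Finset.mem_filter.mpr ⟨h2, hx2⟩
  rw [hf, Finset.mem_singleton] at m1 m2
  rw [m1, m2]

lemma blockOf_eq {R : Finset ℕ} {τ : Finset (Finset ℕ)} {x : ℕ}
    (h : IsPartition R τ) (hx : x ∈ R) {B : Finset ℕ} (hB : B ∈ τ) (hxB : x ∈ B) :
    blockOf τ x = B :=
  part_unique h hx (blockOf_mem h hx).1 (blockOf_mem h hx).2 hB hxB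

/-- the partition of `R.erase i` obtained by removing `i` from `τ`. -/
def remPart (τ : Finset (Finset ℕ)) (i : ℕ) : Finset (Finset ℕ) :=
  if (blockOf τ i).erase i = ∅ then τ.erase (blockOf τ i)
  else insert ((blockOf τ i).erase i) (τ.erase (blockOf τ i))

section
variable {R : Finset ℕ} {τ : Finset (Finset ℕ)} {i : ℕ}

lemma erase_not_mem_i (h : IsPartition R τ) (hi : i ∈ R) :
    ∀ B ∈ τ.erase (blockOf τ i), i ∉ B := by
  intro B hB hiB
  exact (Finset.mem_erase.mp hB).1
    (part_unique h hi (Finset.mem_of_mem_erase hB) hiB (blockOf_mem h hi).1 (blockOf_mem h hi).2)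

lemma bprime_not_mem (h : IsPartition R τ) (hi : i ∈ R)
    (hne : (blockOf τ i).erase i ≠ ∅) :
    (blockOf τ i).erase i ∉ τ.erase (blockOf τ i) := by
  intro hmem
  obtain ⟨x, hx⟩ := Finset.nonempty_iff_ne_empty.mpr hne
  have hxBi : x ∈ blockOf τ i := Finset.mem_of_mem_erase hx
  have hxR : x ∈ R := h.1 _ (blockOf_mem h hi).1 hxBi
  have := part_unique h hxR (Finset.mem_of_mem_erase hmem) hx (blockOf_mem h hi).1 hxBi
  rw [this] at hx
  exact (Finset.mem_erase.mp hmem).1 this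

lemma remPart_isPartition (h : IsPartition R τ) (hi : i ∈ R) :
    IsPartition (R.erase i) (remPart τ i) := by
  have hBiτ := (blockOf_mem h hi).1
  have hiBi := (blockOf_mem h hi).2
  have hsubE : ∀ B ∈ τ.erase (blockOf τ i), B ⊆ R.erase i := by
    intro B hB
    exact Finset.subset_erase.mpr ⟨h.1 B (Finset.mem_of_mem_erase hB), erase_not_mem_i h hi B hB⟩
  have hfilt : ∀ x ∈ R.erase i,
      (τ.erase (blockOf τ i)).filter (fun B => x ∈ B)
        = ({blockOf τ x} : Finset (Finset ℕ)).erase (blockOf τ i) := by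
    intro x hx
    rw [Finset.filter_erase, filter_eq_blockOf h (Finset.mem_of_mem_erase hx)]
  unfold remPart
  split_ifs with hb
  · -- blockOf τ i = {i}
    have hBi1 : blockOf τ i = {i} := by
      rcases (Finset.erase_eq_empty_iff _ _).mp hb with h0 | h0
      · exact absurd (h0 ▸ hiBi) (Finset.notMem_empty i)
      · exact h0
    refine ⟨hsubE, fun hmem => h.2.1 (Finset.mem_of_mem_erase hmem), ?_⟩
    intro x hx
    rw [hfilt x hx]
    have hxi : x ≠ i := (Finset.mem_erase.mp hx).1
    have hxBx : x ∈ blockOf τ x := (blockOf_mem h (Finset.mem_of_mem_erase hx)).2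
    have hne : blockOf τ x ≠ blockOf τ i := by
      intro hEq; rw [hEq, hBi1, Finset.mem_singleton] at hxBx; exact hxi hxBx
    rw [Finset.erase_eq_of_notMem (by simpa using hne.symm)]
    simp
  · constructor
    · intro B hB
      rcases Finset.mem_insert.mp hB with rfl | hB'
      · exact Finset.erase_subset_erase i (h.1 _ hBiτ)
      · exact hsubE B hB'
    constructor
    · intro hmem
      rcases Finset.mem_insert.mp hmem with h0 | h0
      · exact hb h0.symm
      · exact h.2.1 (Finset.mem_of_mem_erase h0)
    · intro x hx
      have hxi : x ≠ i := (Finset.mem_erase.mp hx).1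
      have hxR : x ∈ R := Finset.mem_of_mem_erase hx
      have hxBx : x ∈ blockOf τ x := (blockOf_mem h hxR).2
      rw [Finset.filter_insert]
      by_cases hxb : x ∈ (blockOf τ i).erase i
      · rw [if_pos hxb, hfilt x hx]
        have hBx : blockOf τ x = blockOf τ i :=
          part_unique h hxR (blockOf_mem h hxR).1 hxBx hBiτ (Finset.mem_of_mem_erase hxb)
        rw [hBx, Finset.erase_singleton]
        simp
      · rw [if_neg hxb, hfilt x hx]
        have hne : blockOf τ x ≠ blockOf τ i := by
          intro hEq
          exact hxb (Finset.mem_erase.mpr ⟨hxi, hEq ▸ hxBx⟩)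
        rw [Finset.erase_eq_of_notMem (by simpa using hne.symm)]
        simp

lemma prod_fact_pos (σ : Finset (Finset ℕ)) :
    (0:ℝ) < ∏ B ∈ σ, ((B.card - 1).factorial : ℝ) :=
  Finset.prod_pos (fun B _ => by exact_mod_cast Nat.factorial_pos _)

lemma pstar_remPart (h : IsPartition R τ) (hi : i ∈ R) :
    (pstar (R.erase i) (remPart τ i))⁻¹
      = (R.card : ℝ)⁻¹ *
          (if (blockOf τ i).erase i = ∅ then 1 else ((blockOf τ i).card : ℝ) - 1)
        * (pstar R τ)⁻¹ := by
  have hBiτ := (blockOf_mem h hi).1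
  have hiBi := (blockOf_mem h hi).2
  have hcard : R.card = (R.card - 1) + 1 := (Nat.succ_pred_eq_of_pos (Finset.card_pos.mpr ⟨i, hi⟩)).symm
  have hcardE : (R.erase i).card = R.card - 1 := Finset.card_erase_of_mem hi
  have hprod : (∏ B ∈ τ, ((B.card - 1).factorial : ℝ))
      = (((blockOf τ i).card - 1).factorial : ℝ)
        * ∏ B ∈ τ.erase (blockOf τ i), ((B.card - 1).factorial : ℝ) :=
    (Finset.mul_prod_erase τ _ hBiτ).symm
  have hQpos := prod_fact_pos (τ.erase (blockOf τ i))
  unfold pstar remPart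
  split_ifs with hb
  · -- Bi = {i}
    have hBi1 : blockOf τ i = {i} := by
      rcases (Finset.erase_eq_empty_iff _ _).mp hb with h0 | h0
      · exact absurd (h0 ▸ hiBi) (Finset.notMem_empty i)
      · exact h0
    rw [hBi1] at hprod
    simp only [Finset.card_singleton] at hprod
    norm_num at hprod
    rw [hcardE, hprod, hBi1]
    rw [show R.card = (R.card - 1) + 1 from hcard]
    have h1 : ((R.card - 1 + 1).factorial : ℝ) = ((R.card - 1) + 1 : ℕ) * ((R.card - 1).factorial : ℝ) := by
      rw [Nat.factorial_succ]; push_cast; ring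
    rw [h1]
    have h2 : ((R.card - 1).factorial : ℝ) ≠ 0 := by exact_mod_cast (Nat.factorial_pos _).ne'
    have h3 : ((R.card - 1 : ℕ) + 1 : ℝ) ≠ 0 := by positivity
    have h4 := hQpos.ne'
    field_simp
    all_goals ring_nf
    simp
  · -- |Bi| ≥ 2
    obtain ⟨y, hy⟩ := Finset.nonempty_iff_ne_empty.mpr hb
    have h2le : 2 ≤ (blockOf τ i).card := by
      have : ({i, y} : Finset ℕ) ⊆ blockOf τ i := by
        intro z hz
        rcases Finset.mem_insert.mp hz with rfl | hz
        · exact hiBi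
        · exact Finset.mem_of_mem_erase (Finset.mem_singleton.mp hz ▸ hy)
      calc 2 = ({i, y} : Finset ℕ).card := by
              rw [Finset.card_insert_of_notMem (by simp [(Finset.mem_erase.mp hy).1.symm]),
                Finset.card_singleton]
           _ ≤ _ := Finset.card_le_card this
    obtain ⟨k, hk⟩ : ∃ k, (blockOf τ i).card = k + 2 := ⟨(blockOf τ i).card - 2, by omega⟩
    have hbcard : ((blockOf τ i).erase i).card = k + 1 := by
      rw [Finset.card_erase_of_mem hiBi, hk]
      omega
    have hprod' : (∏ B ∈ insert ((blockOf τ i).erase i) (τ.erase (blockOf τ i)),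
        ((B.card - 1).factorial : ℝ))
        = ((k).factorial : ℝ) * ∏ B ∈ τ.erase (blockOf τ i), ((B.card - 1).factorial : ℝ) := by
      rw [Finset.prod_insert (bprime_not_mem h hi hb), hbcard]
      norm_num
    rw [hcardE, hprod', hprod, hk]
    rw [show R.card = (R.card - 1) + 1 from hcard]
    have h1 : ((R.card - 1 + 1).factorial : ℝ) = ((R.card - 1) + 1 : ℕ) * ((R.card - 1).factorial : ℝ) := by
      rw [Nat.factorial_succ]; push_cast; ring
    have h5 : ((k + 2 - 1).factorial : ℝ) = (k + 1 : ℝ) * (k.factorial : ℝ) := by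
      norm_num [Nat.factorial_succ]
    rw [h1, h5]
    have h2 : ((R.card - 1).factorial : ℝ) ≠ 0 := by exact_mod_cast (Nat.factorial_pos _).ne'
    have h3 : ((R.card - 1 : ℕ) + 1 : ℝ) ≠ 0 := by positivity
    have h6 : ((k : ℝ) + 1) ≠ 0 := by positivity
    have h7 : ((k.factorial : ℝ)) ≠ 0 := by exact_mod_cast (Nat.factorial_pos _).ne'
    have h4 := hQpos.ne'
    have h8 : ((k : ℝ) + 2) - 1 = (k : ℝ) + 1 := by ring
    push_cast
    rw [h8]
    field_simp
    all_goals ring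

end
end TUXAux

namespace TUXAux
open TUX

lemma restrict1_dirac (Ncur T : Finset ℕ) (w : Game) (τ : Finset (Finset ℕ)) (i : ℕ)
    (hT : T ⊆ Ncur) (hiR : i ∈ Ncur \ T) (hτ : IsPartition (Ncur \ T) τ)
    (hw : ∀ π, ∅ ∉ π → (∀ B ∈ π, B ⊆ Ncur \ T) →
      w T π = if π = τ then (pstar (Ncur \ T) τ)⁻¹ else 0) :
    ∀ π, ∅ ∉ π → (∀ B ∈ π, B ⊆ (Ncur \ T).erase i) →
      restrict1 Ncur w i T π
        = if π = remPart τ i then (pstar ((Ncur \ T).erase i) (remPart τ i))⁻¹ else 0 := by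
  intro π hπ0 hπs
  set R := Ncur \ T with hR
  have hBiτ := (blockOf_mem hτ hiR).1
  have hiBi := (blockOf_mem hτ hiR).2
  have hBiR : blockOf τ i ⊆ R := hτ.1 _ hBiτ
  have hτ' : IsPartition (R.erase i) (remPart τ i) := remPart_isPartition hτ hiR
  set Bi := blockOf τ i with hBidef
  set b' := Bi.erase i with hb'def
  set E := τ.erase Bi with hEdef
  have hrem : remPart τ i = if b' = ∅ then E else insert b' E := by
    unfold remPart
    rw [← hBidef, ← hb'def, ← hEdef]
  -- no block of π contains i
  have hπi : ∀ B ∈ π, i ∉ B := fun B hB hiB => (Finset.mem_erase.mp (hπs B hB hiB)).1 rfl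
  -- first argument domain + value
  have h1 : w T (insert {i} π) = if insert {i} π = τ then (pstar R τ)⁻¹ else 0 := by
    refine hw _ ?_ ?_
    · intro h0
      rcases Finset.mem_insert.mp h0 with h0 | h0
      · exact (Finset.singleton_ne_empty i) h0.symm
      · exact hπ0 h0
    · intro B hB
      rcases Finset.mem_insert.mp hB with rfl | hB
      · exact Finset.singleton_subset_iff.mpr hiR
      · exact (hπs B hB).trans (Finset.erase_subset i R)
  -- sum arguments domain + value
  have hBsub : ∀ j, blockOf π j ⊆ R.erase i := by
    intro j
    have hle : ((π.filter (fun B => j ∈ B)).sup id : Finset ℕ) ≤ R.erase i :=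
      Finset.sup_le fun D hD => hπs D (Finset.mem_filter.mp hD).1
    exact hle
  have h2 : ∀ j, w T (addToBlock π i (blockOf π j))
      = if addToBlock π i (blockOf π j) = τ then (pstar R τ)⁻¹ else 0 := by
    intro j
    refine hw _ ?_ ?_
    · intro h0
      rcases Finset.mem_insert.mp h0 with h0 | h0
      · exact (Finset.insert_ne_empty i _) h0.symm
      · exact hπ0 (Finset.mem_of_mem_erase h0)
    · intro B hB
      rcases Finset.mem_insert.mp hB with rfl | hB
      · exact Finset.insert_subset hiR ((hBsub j).trans (Finset.erase_subset i R))
      · exact (hπs B (Finset.mem_of_mem_erase hB)).trans (Finset.erase_subset i R)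
  -- insert {i} π = τ forces π = remPart τ i
  have hins : insert {i} π = τ → π = remPart τ i := by
    intro heq
    have hsing : ({i} : Finset ℕ) ∈ τ := heq ▸ Finset.mem_insert_self _ _
    have hsingBi : ({i} : Finset ℕ) = Bi :=
      part_unique hτ hiR hsing (Finset.mem_singleton_self i) hBiτ hiBi
    have hb0 : b' = ∅ := by rw [hb'def, ← hsingBi, Finset.erase_singleton]
    have hnotmem : ({i} : Finset ℕ) ∉ π := fun hmem => hπi _ hmem (Finset.mem_singleton_self i)
    have hπeq : π = τ.erase {i} := by rw [← heq, Finset.erase_insert hnotmem]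
    rw [hπeq, hsingBi, hrem, if_pos hb0, hEdef]
  -- addToBlock π i (blockOf π j) = τ forces π = remPart τ i
  have hadd : ∀ j, addToBlock π i (blockOf π j) = τ → π = remPart τ i := by
    intro j heq
    set B := blockOf π j with hBdef
    rw [addToBlock] at heq
    have hiB : i ∉ B := fun hmem => (Finset.mem_erase.mp (hBsub j hmem)).1 rfl
    have hCτ : insert i B ∈ τ := heq ▸ Finset.mem_insert_self _ _
    have hCBi : insert i B = Bi :=
      part_unique hτ hiR hCτ (Finset.mem_insert_self i B) hBiτ hiBi
    have hBb' : B = b' := by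
      rw [hb'def, ← hCBi, Finset.erase_insert hiB]
    by_cases hb : b' = ∅
    · have hB0 : B = ∅ := hBb'.trans hb
      rw [hB0, Finset.erase_eq_of_notMem hπ0, insert_empty_eq] at heq
      exact hins heq
    · -- b' nonempty; B = b'
      have hBiπ : Bi ∉ π.erase B := fun hmem => hπi _ (Finset.mem_of_mem_erase hmem) hiBi
      have hπE : π.erase b' = E := by
        rw [← hBb', hEdef, ← hCBi, ← heq,
          Finset.erase_insert (show insert i B ∉ π.erase B by rw [hCBi]; exact hBiπ)]
      have hfilt_ne : (π.filter (fun D => j ∈ D)).Nonempty := by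
        rw [Finset.nonempty_iff_ne_empty]
        intro h0
        apply hb
        rw [← hBb', hBdef]
        simp [blockOf, h0]
      obtain ⟨D, hD⟩ := hfilt_ne
      have hDπ : D ∈ π := (Finset.mem_filter.mp hD).1
      have hjD : j ∈ D := (Finset.mem_filter.mp hD).2
      have hDb' : D ⊆ b' := by
        rw [← hBb', hBdef]
        exact Finset.le_sup (f := id) hD
      have hDeq : D = b' := by
        by_contra hne
        have hDE : D ∈ E := by
          rw [← hπE]; exact Finset.mem_erase.mpr ⟨hne, hDπ⟩
        have hDτ : D ∈ τ := Finset.mem_of_mem_erase (hEdef ▸ hDE)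
        have hjBi : j ∈ Bi := (Finset.erase_subset i Bi) (hb'def ▸ hDb' hjD)
        have hjR : j ∈ R := hBiR hjBi
        have hDBi : D = Bi := part_unique hτ hjR hDτ hjD hBiτ hjBi
        exact hπi D hDπ (hDBi ▸ hiBi)
      have hb'π : b' ∈ π := hDeq ▸ hDπ
      rw [← Finset.insert_erase hb'π, hπE, hrem, if_neg hb]
  by_cases hcase : π = remPart τ i
  · rw [if_pos hcase]
    simp only [restrict1]
    have hmeq : ((Ncur.card : ℝ) - (T.card : ℝ)) = (R.card : ℝ) := by
      rw [hR, Finset.card_sdiff_of_subset hT, Nat.cast_sub (Finset.card_le_card hT)]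
    rw [hmeq, pstar_remPart hτ hiR, ← hBidef, ← hb'def]
    by_cases hb : b' = ∅
    · -- Bi = {i}
      have hBi1 : Bi = {i} := by
        rcases (Finset.erase_eq_empty_iff _ _).mp (hb'def ▸ hb) with h0 | h0
        · exact absurd (h0 ▸ hiBi) (Finset.notMem_empty i)
        · exact h0
      have hτ'E : remPart τ i = E := by rw [hrem, if_pos hb]
      have hfirst : insert {i} π = τ := by
        rw [hcase, hτ'E, ← hBi1, hEdef, Finset.insert_erase hBiτ]
      have hsum : ∀ j ∈ R.erase i, w T (addToBlock π i (blockOf π j)) = 0 := by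
        intro j hj
        rw [h2 j, if_neg]
        intro heq
        have hπpart : IsPartition (R.erase i) π := hcase ▸ hτ'
        have hBπ : blockOf π j ∈ π := (blockOf_mem hπpart hj).1
        have hjB : j ∈ blockOf π j := (blockOf_mem hπpart hj).2
        have hCτ : insert i (blockOf π j) ∈ τ := heq ▸ Finset.mem_insert_self _ _
        have hCBi : insert i (blockOf π j) = Bi :=
          part_unique hτ hiR hCτ (Finset.mem_insert_self _ _) hBiτ hiBi
        have hjBi : j ∈ Bi := hCBi ▸ Finset.mem_insert_of_mem hjB
        rw [hBi1, Finset.mem_singleton] at hjBi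
        exact (Finset.mem_erase.mp hj).1 hjBi
      rw [h1, if_pos hfirst, Finset.sum_congr rfl hsum]
      simp only [Finset.sum_const_zero, add_zero]
      rw [if_pos hb]
      ring
    · -- |Bi| ≥ 2
      have hτ'I : remPart τ i = insert b' E := by rw [hrem, if_neg hb]
      have hπpart : IsPartition (R.erase i) π := hcase ▸ hτ'
      have hfirst : insert {i} π ≠ τ := by
        intro heq
        have hsing : ({i} : Finset ℕ) ∈ τ := heq ▸ Finset.mem_insert_self _ _
        have hsingBi : ({i} : Finset ℕ) = Bi :=
          part_unique hτ hiR hsing (Finset.mem_singleton_self i) hBiτ hiBi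
        exact hb (by rw [hb'def, ← hsingBi, Finset.erase_singleton])
      have hb'π : b' ∈ π := by rw [hcase, hτ'I]; exact Finset.mem_insert_self _ _
      have hb'E : b' ∉ E := hEdef ▸ hb'def ▸ hBidef ▸ bprime_not_mem hτ hiR (hb'def ▸ hb)
      have hsum : ∀ j ∈ R.erase i,
          w T (addToBlock π i (blockOf π j)) = if j ∈ b' then (pstar R τ)⁻¹ else 0 := by
        intro j hj
        rw [h2 j]
        by_cases hjb : j ∈ b'
        · rw [if_pos hjb]
          have hBj : blockOf π j = b' := blockOf_eq hπpart hj hb'π hjb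
          have hpe : π.erase b' = E := by rw [hcase, hτ'I, Finset.erase_insert hb'E]
          have hAB : addToBlock π i (blockOf π j) = τ := by
            rw [hBj, addToBlock, hpe, hb'def, Finset.insert_erase hiBi, hEdef,
              Finset.insert_erase hBiτ]
          rw [if_pos hAB]
        · rw [if_neg hjb, if_neg]
          intro heq
          have hjB : j ∈ blockOf π j := (blockOf_mem hπpart hj).2
          have hCτ : insert i (blockOf π j) ∈ τ := heq ▸ Finset.mem_insert_self _ _
          have hCBi : insert i (blockOf π j) = Bi :=
            part_unique hτ hiR hCτ (Finset.mem_insert_self _ _) hBiτ hiBi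
          have hiB : i ∉ blockOf π j := fun hmem => (Finset.mem_erase.mp (hBsub j hmem)).1 rfl
          have hBb' : blockOf π j = b' := by
            rw [hb'def, ← hCBi, Finset.erase_insert hiB]
          exact hjb (hBb' ▸ hjB)
      rw [h1, if_neg hfirst, Finset.sum_congr rfl hsum]
      rw [Finset.sum_ite_mem]
      have hb'sub : b' ⊆ R.erase i := Finset.erase_subset_erase i hBiR
      rw [Finset.inter_eq_right.mpr hb'sub, Finset.sum_const, nsmul_eq_mul]
      have hb'card : (b'.card : ℝ) = (Bi.card : ℝ) - 1 := by
        rw [hb'def, Finset.card_erase_of_mem hiBi,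
          Nat.cast_sub (Nat.one_le_iff_ne_zero.mpr (Finset.card_ne_zero_of_mem hiBi))]
        norm_num
      rw [hb'card, if_neg hb]
      ring
  · rw [if_neg hcase]
    simp only [restrict1]
    rw [h1, if_neg (fun heq => hcase (hins heq))]
    have hsum : ∀ j ∈ R.erase i, w T (addToBlock π i (blockOf π j)) = 0 := by
      intro j _
      rw [h2 j, if_neg (fun heq => hcase (hadd j heq))]
    rw [Finset.sum_congr rfl hsum]
    simp

end TUXAux

namespace TUXAux
open TUX

lemma restrictL_zero (S : Finset ℕ) (l : List ℕ) : ∀ (Ncur : Finset ℕ) (w : Game),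
    (∀ π, w S π = 0) → ∀ π, restrictL Ncur w l S π = 0 := by
  induction l with
  | nil => intro N w h π; exact h π
  | cons i l ih =>
      intro N w h π
      rw [restrictL]
      refine ih _ _ (fun π' => ?_) π
      simp only [restrict1, h]
      simp

lemma restrictL_dirac (T : Finset ℕ) (l : List ℕ) :
    ∀ (Ncur : Finset ℕ) (w : Game) (τ : Finset (Finset ℕ)),
    l.Nodup → T ⊆ Ncur → l.toFinset = Ncur \ T → IsPartition (Ncur \ T) τ →
    (∀ π, ∅ ∉ π → (∀ B ∈ π, B ⊆ Ncur \ T) →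
      w T π = if π = τ then (pstar (Ncur \ T) τ)⁻¹ else 0) →
    restrictL Ncur w l T ∅ = 1 := by
  induction l with
  | nil =>
      intro Ncur w τ _ hT htf hτ hw
      simp only [List.toFinset_nil] at htf
      have hR : Ncur \ T = ∅ := htf.symm
      have hτ0 : τ = ∅ := by
        by_contra hne
        obtain ⟨B, hB⟩ := Finset.nonempty_iff_ne_empty.mpr hne
        have hsub := hτ.1 B hB
        rw [hR, Finset.subset_empty] at hsub
        exact hτ.2.1 (hsub ▸ hB)
      have hval := hw ∅ (Finset.notMem_empty _) (fun B hB => absurd hB (Finset.notMem_empty _))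
      rw [restrictL, hval, if_pos hτ0.symm, hR, hτ0]
      simp [pstar]
  | cons i l ih =>
      intro Ncur w τ hnd hT htf hτ hw
      rw [List.toFinset_cons] at htf
      rw [List.nodup_cons] at hnd
      have hi : i ∈ Ncur \ T := htf ▸ Finset.mem_insert_self i l.toFinset
      have hiT : i ∉ T := (Finset.mem_sdiff.mp hi).2
      have h1 : Ncur.erase i \ T = (Ncur \ T).erase i := by
        ext x
        simp only [Finset.mem_sdiff, Finset.mem_erase]
        tauto
      have htf' : l.toFinset = Ncur.erase i \ T := by
        rw [h1, ← htf, Finset.erase_insert (by simpa using hnd.1)]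
      have hT' : T ⊆ Ncur.erase i :=
        Finset.subset_erase.mpr ⟨hT, hiT⟩
      have hτ' : IsPartition (Ncur.erase i \ T) (remPart τ i) := by
        rw [h1]; exact remPart_isPartition hτ hi
      have hw' : ∀ π, ∅ ∉ π → (∀ B ∈ π, B ⊆ Ncur.erase i \ T) →
          restrict1 Ncur w i T π
            = if π = remPart τ i then (pstar (Ncur.erase i \ T) (remPart τ i))⁻¹ else 0 := by
        intro π hπ0 hπs
        rw [h1]
        exact restrict1_dirac Ncur T w τ i hT hi hτ hw π hπ0 (by rwa [h1] at hπs)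
      rw [restrictL]
      exact ih (Ncur.erase i) (restrict1 Ncur w i) (remPart τ i) hnd.2 hT' htf' hτ' hw'

end TUXAux

open TUX TUXAux in
theorem auxGame_scaledDirac' (N T : Finset ℕ) (τ : Finset (Finset ℕ))
    (hT : T ⊆ N) (hτ : IsPartition (N \ T) τ) :
    ∀ S ⊆ N, auxGame N (scaledDirac N T τ) S = if S = T then 1 else 0 := by
  intro S hS
  by_cases hST : S = T
  · subst hST
    rw [if_pos rfl]
    unfold auxGame restrictSet
    exact restrictL_dirac S _ N _ τ (Finset.sort_nodup _ _) hT (Finset.sort_toFinset _ _) hτ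
      (fun π _ _ => by simp [scaledDirac])
  · rw [if_neg hST]
    unfold auxGame restrictSet
    exact restrictL_zero S _ N _ (fun π => by simp [scaledDirac, hST]) ∅

open TUX in
/-- The auxiliary TU game of a scaled Dirac game is the Dirac TU game. -/
theorem auxGame_scaledDirac (N T : Finset ℕ) (τ : Finset (Finset ℕ))
    (hT : T ⊆ N) (hτ : IsPartition (N \ T) τ) :
    ∀ S ⊆ N, auxGame N (scaledDirac N T τ) S = if S = T then 1 else 0 := by
  exact auxGame_scaledDirac' N T τ hT hτ
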